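/- Let K be a field and q ∈ K an element that is not a root of unity. In the quantum plane B = B(q), let J = B(a−1) and W = B/J, and for n ≥ 0 let W_n = B·(bⁿ + J). Then for m ≠ n the B-modules W_m and W_n are not isomorphic; that is, the nonzero submodules of W are pairwise non-isomorphic. -/

import Mathlib

noncomputable section

open FreeAlgebra

/-- Defining relation of the quantum plane `B(q)`: `a * b = q • (b * a)`, where
`ι K 0` plays the role of `a` and `ι K 1` plays the role of `b`. -/
inductive QuantumPlaneRel (K : Type) [Field K] (q : K) :
    FreeAlgebra K (Fin 2) → FreeAlgebra K (Fin 2) → Prop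
  | rel : QuantumPlaneRel K q (ι K (0 : Fin 2) * ι K (1 : Fin 2))
      (q • (ι K (1 : Fin 2) * ι K (0 : Fin 2)))

/-- The coordinate algebra of the quantum plane `B(q)`. -/
abbrev QuantumPlane (K : Type) [Field K] (q : K) : Type :=
  RingQuot (QuantumPlaneRel K q)

/-- The generator `a` of the quantum plane. -/
def QuantumPlane.a (K : Type) [Field K] (q : K) : QuantumPlane K q :=
  RingQuot.mkAlgHom K (QuantumPlaneRel K q) (ι K (0 : Fin 2))

/-- The generator `b` of the quantum plane. -/
def QuantumPlane.b (K : Type) [Field K] (q : K) : QuantumPlane K q :=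
  RingQuot.mkAlgHom K (QuantumPlaneRel K q) (ι K (1 : Fin 2))

namespace QPProof
open QuantumPlane Finsupp
variable (K : Type) [Field K] (q : K)

/-- `a` acts on `single k c` by `q^k`. -/
def Aop : Module.End K (ℕ →₀ K) := Finsupp.lsum K fun k => q ^ k • Finsupp.lsingle k

/-- `b` acts by shifting. -/
def Bop : Module.End K (ℕ →₀ K) := Finsupp.lmapDomain K K (· + 1)

@[simp] lemma Aop_single (k : ℕ) (c : K) :
    Aop K q (single k c) = q ^ k • single k c := by simp [Aop]

@[simp] lemma Bop_single (k : ℕ) (c : K) :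
    Bop K (single k c) = single (k + 1) c := by simp [Bop, mapDomain_single]

lemma rel_ops : Aop K q * Bop K = q • (Bop K * Aop K q) := by
  apply Finsupp.lhom_ext
  intro k c
  rw [Module.End.mul_apply, LinearMap.smul_apply, Module.End.mul_apply, Aop_single,
    LinearMap.map_smul, Bop_single, Aop_single, smul_smul]
  congr 1
  ring

def ρ : QuantumPlane K q →ₐ[K] Module.End K (ℕ →₀ K) :=
  RingQuot.liftAlgHom K ⟨FreeAlgebra.lift K (fun i => if i = 0 then Aop K q else Bop K), by
    rintro x y ⟨⟩
    simp [rel_ops]⟩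

@[simp] lemma ρ_a : ρ K q (a K q) = Aop K q := by
  simp [ρ, QuantumPlane.a, RingQuot.liftAlgHom_mkAlgHom_apply]

@[simp] lemma ρ_b : ρ K q (b K q) = Bop K := by
  simp [ρ, QuantumPlane.b, RingQuot.liftAlgHom_mkAlgHom_apply]

end QPProof

namespace QPProof
open QuantumPlane Finsupp
variable (K : Type) [Field K] (q : K)

local notation "J" => Ideal.span {QuantumPlane.a K q - 1}

lemma a_rel : a K q * b K q = q • (b K q * a K q) := by
  have := RingQuot.mkAlgHom_rel K (QuantumPlaneRel.rel (K := K) (q := q))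
  simpa only [QuantumPlane.a, QuantumPlane.b, map_mul, map_smul] using this

lemma a_pow_rel (i : ℕ) : a K q * b K q ^ i = q ^ i • (b K q ^ i * a K q) := by
  induction i with
  | zero => simp
  | succ i ih =>
    have : a K q * b K q ^ (i + 1) = (a K q * b K q ^ i) * b K q := by
      rw [pow_succ, ← mul_assoc]
    rw [this, ih, smul_mul_assoc, mul_assoc, a_rel, mul_smul_comm, smul_smul,
      ← mul_assoc, ← pow_succ, ← pow_succ]

lemma adjoin_ab : Algebra.adjoin K {a K q, b K q} = ⊤ := by
  have h1 : Algebra.adjoin K (Set.range (ι K : Fin 2 → FreeAlgebra K (Fin 2))) = ⊤ :=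
    FreeAlgebra.adjoin_range_ι K (Fin 2)
  have h2 := AlgHom.map_adjoin (RingQuot.mkAlgHom K (QuantumPlaneRel K q))
    (Set.range (ι K : Fin 2 → FreeAlgebra K (Fin 2)))
  have himg : (RingQuot.mkAlgHom K (QuantumPlaneRel K q)) ''
      (Set.range (ι K : Fin 2 → FreeAlgebra K (Fin 2))) = {a K q, b K q} := by
    rw [← Set.range_comp]
    ext x
    simp only [Set.mem_range, Function.comp_apply, Fin.exists_fin_two,
      Set.mem_insert_iff, Set.mem_singleton_iff, QuantumPlane.a, QuantumPlane.b,
      eq_comm]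
  rw [h1, himg, Algebra.map_top] at h2
  rw [← h2]
  exact (AlgHom.range_eq_top _).2 (RingQuot.mkAlgHom_surjective K (QuantumPlaneRel K q))

end QPProof

namespace QPProof
open QuantumPlane Finsupp
variable (K : Type) [Field K] (q : K)

local notation "J" => (Ideal.span {QuantumPlane.a K q - 1} : Ideal (QuantumPlane K q))

def β : (ℕ →₀ K) →ₗ[K] QuantumPlane K q :=
  Finsupp.lsum K fun i => LinearMap.toSpanSingleton K _ (b K q ^ i)

@[simp] lemma β_single (i : ℕ) (c : K) : β K q (single i c) = c • b K q ^ i := by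
  simp [β, LinearMap.toSpanSingleton_apply]

def Φ : QuantumPlane K q →ₗ[K] (ℕ →₀ K) :=
  (LinearMap.applyₗ (single 0 (1 : K))).comp (ρ K q).toLinearMap

lemma Φ_apply (r : QuantumPlane K q) : Φ K q r = ρ K q r (single 0 1) := rfl

lemma Φ_mul (x y : QuantumPlane K q) : Φ K q (x * y) = ρ K q x (Φ K q y) := by
  rw [Φ_apply, Φ_apply, map_mul]; rfl

@[simp] lemma Φ_b_pow (i : ℕ) : Φ K q (b K q ^ i) = single i (1 : K) := by
  induction i with
  | zero => simp [Φ_apply]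
  | succ i ih =>
    have : b K q ^ (i + 1) = b K q * b K q ^ i := by rw [pow_succ']
    rw [this, Φ_mul, ih, ρ_b, Bop_single]

lemma Φ_β (p : ℕ →₀ K) : Φ K q (β K q p) = p := by
  induction p using Finsupp.induction_linear with
  | zero => simp
  | add f g hf hg => rw [map_add, map_add, hf, hg]
  | single i c =>
    rw [β_single, map_smul, Φ_b_pow, smul_single, smul_eq_mul, mul_one]

lemma Φ_J (x : QuantumPlane K q) (hx : x ∈ J) : Φ K q x = 0 := by
  obtain ⟨c, rfl⟩ := Ideal.mem_span_singleton'.1 hx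
  rw [Φ_mul]
  have : Φ K q (a K q - 1) = 0 := by
    rw [map_sub, Φ_apply, Φ_apply, ρ_a, map_one, Aop_single, Module.End.one_apply,
      pow_zero, one_smul, sub_self]
  rw [this, map_zero]

lemma mul_sub_one_mem (x : QuantumPlane K q) : x * (a K q - 1) ∈ J :=
  Ideal.mem_span_singleton'.2 ⟨x, rfl⟩

lemma normal_form (x : QuantumPlane K q) : ∃ p, x - β K q p ∈ J := by
  have hx : x ∈ Algebra.adjoin K {a K q, b K q} := by rw [adjoin_ab]; trivial
  have key : ∀ y, y ∈ Algebra.adjoin K {a K q, b K q} →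
      ∀ p : ℕ →₀ K, ∃ p', y * β K q p - β K q p' ∈ J := by
    intro y hy
    induction hy using Algebra.adjoin_induction with
    | mem y hy =>
      rcases hy with rfl | rfl
      · -- y = a
        intro p
        induction p using Finsupp.induction_linear with
        | zero => exact ⟨0, by simp⟩
        | add f g hf hg =>
          obtain ⟨p₁, h₁⟩ := hf; obtain ⟨p₂, h₂⟩ := hg
          refine ⟨p₁ + p₂, ?_⟩
          have : a K q * β K q (f + g) - β K q (p₁ + p₂) =
              (a K q * β K q f - β K q p₁) + (a K q * β K q g - β K q p₂) := by
            rw [map_add, map_add, mul_add]; abel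
          rw [this]; exact add_mem h₁ h₂
        | single i c =>
          refine ⟨single i (c * q ^ i), ?_⟩
          have h1 : a K q * β K q (single i c) - β K q (single i (c * q ^ i)) =
              (c * q ^ i) • (b K q ^ i * (a K q - 1)) := by
            rw [β_single, β_single, mul_smul_comm, a_pow_rel, smul_smul, mul_sub,
              mul_one, smul_sub, mul_comm]
          rw [h1, Algebra.smul_def]
          exact Ideal.mul_mem_left _ _ (mul_sub_one_mem K q _)
      · -- y = b
        intro p
        induction p using Finsupp.induction_linear with
        | zero => exact ⟨0, by simp⟩
        | add f g hf hg =>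
          obtain ⟨p₁, h₁⟩ := hf; obtain ⟨p₂, h₂⟩ := hg
          refine ⟨p₁ + p₂, ?_⟩
          have : b K q * β K q (f + g) - β K q (p₁ + p₂) =
              (b K q * β K q f - β K q p₁) + (b K q * β K q g - β K q p₂) := by
            rw [map_add, map_add, mul_add]; abel
          rw [this]; exact add_mem h₁ h₂
        | single i c =>
          refine ⟨single (i + 1) c, ?_⟩
          rw [β_single, β_single, mul_smul_comm, ← pow_succ']
          simp
    | algebraMap r =>
      intro p
      exact ⟨r • p, by rw [map_smul, Algebra.smul_def, sub_self]; exact zero_mem _⟩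
    | add x y hx hy hpx hpy =>
      intro p
      obtain ⟨p₁, h₁⟩ := hpx p; obtain ⟨p₂, h₂⟩ := hpy p
      refine ⟨p₁ + p₂, ?_⟩
      have : (x + y) * β K q p - β K q (p₁ + p₂) =
          (x * β K q p - β K q p₁) + (y * β K q p - β K q p₂) := by
        rw [map_add, add_mul]; abel
      rw [this]; exact add_mem h₁ h₂
    | mul x y hx hy hpx hpy =>
      intro p
      obtain ⟨p₁, h₁⟩ := hpy p
      obtain ⟨p₂, h₂⟩ := hpx p₁
      refine ⟨p₂, ?_⟩
      have : x * y * β K q p - β K q p₂ =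
          x * (y * β K q p - β K q p₁) + (x * β K q p₁ - β K q p₂) := by
        rw [mul_sub, ← mul_assoc]; abel
      rw [this]
      exact add_mem (Ideal.mul_mem_left _ _ h₁) h₂
  obtain ⟨p', hp'⟩ := key x hx (single 0 1)
  refine ⟨p', ?_⟩
  simpa using hp'

lemma Φ_ker (x : QuantumPlane K q) (h : Φ K q x = 0) : x ∈ J := by
  obtain ⟨p, hp⟩ := normal_form K q x
  have h2 : Φ K q (x - β K q p) = 0 := Φ_J K q _ hp
  rw [map_sub, h, Φ_β, zero_sub, neg_eq_zero] at h2
  rw [h2, map_zero, sub_zero] at hp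
  exact hp

end QPProof

namespace QPProof
open QuantumPlane Finsupp
variable (K : Type) [Field K] (q : K)

local notation "J" => (Ideal.span {QuantumPlane.a K q - 1} : Ideal (QuantumPlane K q))

lemma Aop_apply_coe (w : ℕ →₀ K) (j : ℕ) : Aop K q w j = q ^ j * w j := by
  classical
  induction w using Finsupp.induction_linear with
  | zero => simp
  | add f g hf hg => simp [map_add, Finsupp.add_apply, hf, hg, mul_add]
  | single k c =>
    rcases eq_or_ne k j with rfl | h
    · simp
    · simp [Finsupp.single_apply, h]

lemma ρ_mem_supported (n : ℕ) (x : QuantumPlane K q) :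
    ∀ w ∈ Finsupp.supported K K (Set.Ici n),
      ρ K q x w ∈ Finsupp.supported K K (Set.Ici n) := by
  classical
  have hx : x ∈ Algebra.adjoin K {a K q, b K q} := by rw [adjoin_ab]; trivial
  induction hx using Algebra.adjoin_induction with
  | mem y hy =>
    rcases hy with rfl | rfl
    · intro w hw
      rw [Finsupp.mem_supported] at hw
      rw [ρ_a, Finsupp.mem_supported]
      intro j hj
      have hne : Aop K q w j ≠ 0 := Finsupp.mem_support_iff.1 hj
      rw [Aop_apply_coe] at hne
      exact hw (Finsupp.mem_support_iff.2 fun h => hne (by rw [h, mul_zero]))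
    · intro w hw
      rw [ρ_b]
      rw [Finsupp.mem_supported] at hw ⊢
      intro j hj
      have hsub : (Bop K w).support ⊆ w.support.image (· + 1) :=
        Finsupp.mapDomain_support
      obtain ⟨k, hk, rfl⟩ := Finset.mem_image.1 (hsub hj)
      exact le_trans (hw hk) (Nat.le_succ k)
  | algebraMap r =>
    intro w hw
    rw [AlgHom.commutes, Module.algebraMap_end_apply]
    exact Submodule.smul_mem _ _ hw
  | add x y _ _ hx hy =>
    intro w hw
    rw [map_add, LinearMap.add_apply]
    exact add_mem (hx w hw) (hy w hw)
  | mul x y _ _ hx hy =>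
    intro w hw
    rw [map_mul, Module.End.mul_apply]
    exact hx _ (hy w hw)

lemma eigen_zero (hq0 : q ≠ 0) (hq : ∀ k : ℕ, 0 < k → q ^ k ≠ 1) (m n : ℕ) (hmn : m < n)
    (w : ℕ →₀ K) (hw : w ∈ Finsupp.supported K K (Set.Ici n))
    (h : Aop K q w = q ^ m • w) : w = 0 := by
  ext j
  rw [Finsupp.zero_apply]
  by_contra hj
  have hjn : n ≤ j := ((Finsupp.mem_supported K w).1 hw) (Finsupp.mem_support_iff.2 hj)
  have h1 : q ^ j * w j = q ^ m * w j := by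
    have := DFunLike.congr_fun h j
    rwa [Aop_apply_coe, Finsupp.smul_apply, smul_eq_mul] at this
  have h2 : q ^ j = q ^ m := mul_right_cancel₀ hj h1
  have h3 : q ^ (j - m) = 1 := by
    have hle : m ≤ j := le_of_lt (lt_of_lt_of_le hmn hjn)
    have : q ^ m * q ^ (j - m) = q ^ m * 1 := by
      rw [← pow_add, Nat.add_sub_cancel' hle, h2, mul_one]
    exact mul_left_cancel₀ (pow_ne_zero _ hq0) this
  exact hq (j - m) (by omega) h3

lemma aux (hq0 : q ≠ 0) (hq : ∀ k : ℕ, 0 < k → q ^ k ≠ 1) (m n : ℕ) (hmn : m < n)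
    (φ : (Submodule.span (QuantumPlane K q)
          {Submodule.Quotient.mk (p := J) (QuantumPlane.b K q ^ m)}) ≃ₗ[QuantumPlane K q]
        (Submodule.span (QuantumPlane K q)
          {Submodule.Quotient.mk (p := J) (QuantumPlane.b K q ^ n)})) : False := by
  set u : (Submodule.span (QuantumPlane K q)
      {Submodule.Quotient.mk (p := J) (QuantumPlane.b K q ^ m)}) :=
    ⟨Submodule.Quotient.mk (b K q ^ m), Submodule.mem_span_singleton_self _⟩ with hu
  have ha_u : (a K q) • u = (algebraMap K (QuantumPlane K q) (q ^ m)) • u := by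
    apply Subtype.ext
    rw [SetLike.val_smul, SetLike.val_smul, hu]
    show a K q • Submodule.Quotient.mk (p := J) (b K q ^ m) =
      algebraMap K (QuantumPlane K q) (q ^ m) • Submodule.Quotient.mk (p := J) (b K q ^ m)
    rw [← Submodule.Quotient.mk_smul, ← Submodule.Quotient.mk_smul, Submodule.Quotient.eq]
    rw [smul_eq_mul, smul_eq_mul, a_pow_rel, Algebra.smul_def, ← mul_sub]
    have hfac : b K q ^ m * a K q - b K q ^ m = b K q ^ m * (a K q - 1) := by
      rw [mul_sub, mul_one]
    rw [hfac]
    exact Ideal.mul_mem_left _ _ (mul_sub_one_mem K q _)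
  set v := φ u with hv
  have ha_v : (a K q) • v = (algebraMap K (QuantumPlane K q) (q ^ m)) • v := by
    rw [hv, ← map_smul, ← map_smul, ha_u]
  obtain ⟨c, hc⟩ := Submodule.mem_span_singleton.1 v.2
  have hv1 : (v : (QuantumPlane K q) ⧸ J) = Submodule.Quotient.mk (c * b K q ^ n) := by
    rw [← hc, ← Submodule.Quotient.mk_smul, smul_eq_mul]
  have hmk : Submodule.Quotient.mk (p := J) (a K q * (c * b K q ^ n)) =
      Submodule.Quotient.mk (p := J)
        (algebraMap K (QuantumPlane K q) (q ^ m) * (c * b K q ^ n)) := by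
    have hval := congrArg Subtype.val ha_v
    rw [SetLike.val_smul, SetLike.val_smul, hv1] at hval
    rwa [← Submodule.Quotient.mk_smul, ← Submodule.Quotient.mk_smul, smul_eq_mul,
      smul_eq_mul] at hval
  have hmem : a K q * (c * b K q ^ n) -
      algebraMap K (QuantumPlane K q) (q ^ m) * (c * b K q ^ n) ∈ J :=
    (Submodule.Quotient.eq _).1 hmk
  -- transfer via Φ
  set w0 := ρ K q c (single n (1 : K)) with hw0
  have hΦc : Φ K q (c * b K q ^ n) = w0 := by
    rw [Φ_mul, Φ_b_pow]
  have hΦ0 : Φ K q (a K q * (c * b K q ^ n) -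
      algebraMap K (QuantumPlane K q) (q ^ m) * (c * b K q ^ n)) = 0 := Φ_J K q _ hmem
  rw [map_sub, Φ_mul, hΦc, Φ_mul, hΦc, ρ_a, AlgHom.commutes, Module.algebraMap_end_apply,
    sub_eq_zero] at hΦ0
  -- w0 is supported in Ici n
  have hw0supp : w0 ∈ Finsupp.supported K K (Set.Ici n) := by
    refine ρ_mem_supported K q n c _ ?_
    rw [Finsupp.mem_supported, Finsupp.support_single_ne_zero _ (one_ne_zero)]
    intro j hj
    simp only [Finset.coe_singleton, Set.mem_singleton_iff] at hj
    simp [hj]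
  have hw0zero : w0 = 0 := eigen_zero K q hq0 hq m n hmn w0 hw0supp hΦ0
  -- hence c * b^n ∈ J and v = 0
  have hcb : c * b K q ^ n ∈ J := Φ_ker K q _ (by rw [hΦc, hw0zero])
  have hvz : v = 0 := by
    apply Subtype.ext
    rw [hv1, ZeroMemClass.coe_zero, Submodule.Quotient.mk_eq_zero]
    exact hcb
  have huz : u = 0 := by
    have h0 : φ u = 0 := by rw [← hv, hvz]
    exact φ.map_eq_zero_iff.1 h0
  have hbm : Submodule.Quotient.mk (p := J) (b K q ^ m) = 0 := by
    have := congrArg Subtype.val huz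
    rwa [hu, ZeroMemClass.coe_zero] at this
  have hbmJ : b K q ^ m ∈ J := (Submodule.Quotient.mk_eq_zero _).1 hbm
  have : Φ K q (b K q ^ m) = 0 := Φ_J K q _ hbmJ
  rw [Φ_b_pow] at this
  exact one_ne_zero (Finsupp.single_eq_zero.1 this)

end QPProof

/-- In the quantum plane `B = B(q)` with `q` not a root of unity, with `J = B(a-1)`,
`W = B/J` and `W_n = B·(bⁿ + J)`, the modules `W_m` and `W_n` are non-isomorphic for
`m ≠ n`: the nonzero submodules of `W` are pairwise non-isomorphic. -/
theorem quantumPlane_W_submodules_nonisomorphic (K : Type) [Field K] (q : K)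
    (hq0 : q ≠ 0) (hq : ∀ k : ℕ, 0 < k → q ^ k ≠ 1) :
    ∀ m n : ℕ, m ≠ n →
      IsEmpty ((Submodule.span (QuantumPlane K q)
          {Submodule.Quotient.mk (p := (Ideal.span {QuantumPlane.a K q - 1} :
            Ideal (QuantumPlane K q))) (QuantumPlane.b K q ^ m)}) ≃ₗ[QuantumPlane K q]
        (Submodule.span (QuantumPlane K q)
          {Submodule.Quotient.mk (p := (Ideal.span {QuantumPlane.a K q - 1} :
            Ideal (QuantumPlane K q))) (QuantumPlane.b K q ^ n)})) := by
  intro m n hmn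
  constructor
  intro φ
  rcases hmn.lt_or_gt with h | h
  · exact QPProof.aux K q hq0 hq m n h φ
  · exact QPProof.aux K q hq0 hq n m h φ.symm

end
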